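/- Let 0 < d < 1, integers 1 ≤ m < n with (m,n) ∈ {(1,2),(1,3),(2,3)}, ξ_G, ξ_I, ξ_II with 0 ≤ ξ_G < ξ_I and ξ_II = 2ξ_I, γ_I = (ξ_II² − ξ_G²)/(ξ_II² − ξ_I²), γ_II = (ξ_G² − ξ_I²)/(ξ_II² − ξ_I²), and σ_I, σ_II ∈ [0,1]. Then K := γ_I d^m (σ_I + (1−σ_I)d) + γ_II d^n (σ_II + (1−σ_II)d) satisfies 0 < K < 1. -/

import Mathlib

lemma aux_4d_lt (d : ℝ) (hd0 : 0 ≤ d) (hd1 : d < 1) : 4 * d - d ^ 4 < 3 := by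
  nlinarith [mul_pos (sub_pos.2 hd1) (show (0:ℝ) < 3 - d - d^2 - d^3 by
    nlinarith [pow_lt_one₀ hd0 hd1 (by norm_num : 2 ≠ 0),
               pow_lt_one₀ hd0 hd1 (by norm_num : 3 ≠ 0)]), sq_nonneg d]

theorem contraction_constant_bounds
    (d : ℝ) (hd0 : 0 < d) (hd1 : d < 1)
    (m n : ℕ) (hmn : (m, n) = (1, 2) ∨ (m, n) = (1, 3) ∨ (m, n) = (2, 3))
    (ξG ξI ξII : ℝ) (hG : 0 ≤ ξG) (hGI : ξG < ξI) (hII : ξII = 2 * ξI)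
    (γI γII : ℝ)
    (hγI : γI = (ξII ^ 2 - ξG ^ 2) / (ξII ^ 2 - ξI ^ 2))
    (hγII : γII = (ξG ^ 2 - ξI ^ 2) / (ξII ^ 2 - ξI ^ 2))
    (σI σII : ℝ) (hσI : σI ∈ Set.Icc (0:ℝ) 1) (hσII : σII ∈ Set.Icc (0:ℝ) 1) :
    0 < γI * d ^ m * (σI + (1 - σI) * d) + γII * d ^ n * (σII + (1 - σII) * d) ∧
    γI * d ^ m * (σI + (1 - σI) * d) + γII * d ^ n * (σII + (1 - σII) * d) < 1 := by
  obtain ⟨hσI0, hσI1⟩ := hσI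
  obtain ⟨hσII0, hσII1⟩ := hσII
  have hξI : 0 < ξI := lt_of_le_of_lt hG hGI
  subst hII
  have hden : (0:ℝ) < 3 * ξI ^ 2 := by positivity
  have hdenne : (2 * ξI) ^ 2 - ξI ^ 2 ≠ 0 := by nlinarith
  have hγIe : γI = 1 - γII := by
    rw [hγI, hγII]
    field_simp
    ring
  have hγIIneg : γII < 0 := by
    rw [hγII]
    have h1 : (2 * ξI) ^ 2 - ξI ^ 2 = 3 * ξI ^ 2 := by ring
    rw [h1]
    apply div_neg_of_neg_of_pos _ hden
    nlinarith
  have hγIIge : -(1/3) ≤ γII := by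
    rw [hγII]
    have h1 : (2 * ξI) ^ 2 - ξI ^ 2 = 3 * ξI ^ 2 := by ring
    rw [h1, le_div_iff₀ hden]
    nlinarith
  have hmn' : 1 ≤ m ∧ m + 1 ≤ n ∧ n ≤ 3 := by
    rcases hmn with h | h | h <;>
      (simp only [Prod.mk.injEq] at h; omega)
  obtain ⟨hm1, hmn1, hn3⟩ := hmn'
  have hd0' : (0:ℝ) ≤ d := hd0.le
  have hd1' : d ≤ 1 := hd1.le
  set sI := σI + (1 - σI) * d with hsIdef
  set sII := σII + (1 - σII) * d with hsIIdef
  have hsIlb : d ≤ sI := by rw [hsIdef]; nlinarith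
  have hsIub : sI ≤ 1 := by rw [hsIdef]; nlinarith
  have hsIIlb : d ≤ sII := by rw [hsIIdef]; nlinarith
  have hsIIub : sII ≤ 1 := by rw [hsIIdef]; nlinarith
  rw [mul_assoc γI, mul_assoc γII, hγIe]
  set A := d ^ m * sI with hAdef
  set B := d ^ n * sII with hBdef
  have hdm : (0:ℝ) < d ^ m := pow_pos hd0 m
  have hdn : (0:ℝ) < d ^ n := pow_pos hd0 n
  have hApos : 0 < A := by
    rw [hAdef]; exact mul_pos hdm (lt_of_lt_of_le hd0 hsIlb)
  have hAled : A ≤ d := by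
    have h1 : d ^ m ≤ d ^ 1 := pow_le_pow_of_le_one hd0' hd1' hm1
    rw [hAdef]
    calc d ^ m * sI ≤ d ^ m * 1 := mul_le_mul_of_nonneg_left hsIub hdm.le
      _ = d ^ m := mul_one _
      _ ≤ d ^ 1 := h1
      _ = d := pow_one d
  have hBge : d ^ 4 ≤ B := by
    have h1 : d ^ 4 ≤ d ^ (n + 1) := pow_le_pow_of_le_one hd0' hd1' (by omega)
    rw [hBdef]
    calc d ^ 4 ≤ d ^ (n + 1) := h1
      _ = d ^ n * d := by rw [pow_succ]
      _ ≤ d ^ n * sII := mul_le_mul_of_nonneg_left hsIIlb hdn.le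
  have hAB : B ≤ A := by
    have h1 : d ^ n ≤ d ^ (m + 1) := pow_le_pow_of_le_one hd0' hd1' hmn1
    rw [hAdef, hBdef]
    calc d ^ n * sII ≤ d ^ n * 1 := mul_le_mul_of_nonneg_left hsIIub hdn.le
      _ = d ^ n := mul_one _
      _ ≤ d ^ (m + 1) := h1
      _ = d ^ m * d := by rw [pow_succ]
      _ ≤ d ^ m * sI := mul_le_mul_of_nonneg_left hsIlb hdm.le
  have hkey : 0 ≤ (-γII) * (A - B) := by
    apply mul_nonneg (by linarith) (by linarith)
  constructor
  · have e : (1 - γII) * A + γII * B = A + (-γII) * (A - B) := by ring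
    linarith
  · have hkey2 : (-γII) * (A - B) ≤ (1/3) * (A - B) :=
      mul_le_mul_of_nonneg_right (by linarith) (by linarith)
    have hd4 : 4 * d - d ^ 4 < 3 := aux_4d_lt d hd0' hd1
    have e : (1 - γII) * A + γII * B = A + (-γII) * (A - B) := by ring
    linarith
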